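/- Let A ⊆ F_q with |A| ≥ C q^{1/2 + 1/(2d)} for a sufficiently large absolute constant C, and suppose |A+A| ≤ C'|A|. Then |A^d| ≥ cq for some constant c > 0 depending only on C, C', d. -/

import Mathlib

open Finset Pointwise

variable {F : Type} [Field F] [Fintype F] [DecidableEq F]

lemma line_card (m b : F) :
    ((univ : Finset (F × F)).filter fun p => p.2 = m * (p.1 - b)).card = Fintype.card F := by
  have : ((univ : Finset (F × F)).filter fun p => p.2 = m * (p.1 - b))
      = (univ : Finset F).image (fun x => (x, m * (x - b))) := by
    ext p
    simp only [mem_filter, mem_univ, true_and, mem_image]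
    constructor
    · rintro h
      exact ⟨p.1, by rw [← h]⟩
    · rintro ⟨x, rfl⟩
      rfl
  rw [this, Finset.card_image_of_injective _ (fun x y h => (Prod.mk.injEq _ _ _ _).mp h |>.1)]
  simp

lemma two_lines (l l' : F × F) (hl : l.1 ≠ 0) (hne : l ≠ l') :
    ((univ : Finset (F × F)).filter fun p => p.2 = l.1 * (p.1 - l.2) ∧ p.2 = l'.1 * (p.1 - l'.2)).card ≤ 1 := by
  apply Finset.card_le_one.mpr
  intro p hp p' hp'
  simp only [mem_filter, mem_univ, true_and] at hp hp'
  obtain ⟨h1, h2⟩ := hp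
  obtain ⟨h1', h2'⟩ := hp'
  by_cases hm : l.1 = l'.1
  · exfalso
    have key : l.1 * (p.1 - l.2) = l.1 * (p.1 - l'.2) := by
      linear_combination h2 - h1 - (p.1 - l'.2) * hm
    have hb : l.2 = l'.2 := by
      have := mul_left_cancel₀ hl key
      linear_combination -this
    exact hne (Prod.ext hm hb)
  · have e1 : (l.1 - l'.1) * p.1 = l.1 * l.2 - l'.1 * l'.2 := by
      linear_combination h2 - h1
    have e1' : (l.1 - l'.1) * p'.1 = l.1 * l.2 - l'.1 * l'.2 := by
      linear_combination h2' - h1'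
    have hx : p.1 = p'.1 :=
      mul_left_cancel₀ (sub_ne_zero.mpr hm) (e1.trans e1'.symm)
    have hy : p.2 = p'.2 := by rw [h1, h1', hx]
    exact Prod.ext hx hy

-- first moment of N
lemma sum_N (L : Finset (F × F)) :
    ∑ p : F × F, (L.filter (fun l => p.2 = l.1 * (p.1 - l.2))).card
      = L.card * Fintype.card F := by
  simp_rw [Finset.card_filter]
  rw [Finset.sum_comm]
  rw [Finset.sum_congr rfl (fun l _ => ?_), Finset.sum_const, smul_eq_mul]
  rw [← Finset.card_filter]
  exact line_card l.1 l.2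

-- second moment of N
lemma sum_N_sq (L : Finset (F × F)) (hL : ∀ l ∈ L, l.1 ≠ (0:F)) :
    ∑ p : F × F, (L.filter (fun l => p.2 = l.1 * (p.1 - l.2))).card ^ 2
      ≤ L.card * Fintype.card F + L.card ^ 2 := by
  have expand : ∀ p : F × F, (L.filter (fun l => p.2 = l.1 * (p.1 - l.2))).card ^ 2
      = ∑ l ∈ L, ∑ l' ∈ L,
          (if p.2 = l.1 * (p.1 - l.2) ∧ p.2 = l'.1 * (p.1 - l'.2) then 1 else 0) := by
    intro p
    rw [sq, Finset.card_filter, Finset.sum_mul_sum]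
    refine Finset.sum_congr rfl fun l _ => Finset.sum_congr rfl fun l' _ => ?_
    by_cases h1 : p.2 = l.1 * (p.1 - l.2) <;> by_cases h2 : p.2 = l'.1 * (p.1 - l'.2) <;>
      simp [h1, h2]
  calc ∑ p : F × F, (L.filter (fun l => p.2 = l.1 * (p.1 - l.2))).card ^ 2
      = ∑ l ∈ L, ∑ l' ∈ L, ((univ : Finset (F × F)).filter
          (fun p => p.2 = l.1 * (p.1 - l.2) ∧ p.2 = l'.1 * (p.1 - l'.2))).card := by
        simp_rw [expand]
        rw [Finset.sum_comm]
        refine Finset.sum_congr rfl fun l _ => ?_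
        rw [Finset.sum_comm]
        refine Finset.sum_congr rfl fun l' _ => ?_
        rw [Finset.card_filter]
    _ ≤ ∑ l ∈ L, ∑ l' ∈ L, (if l = l' then Fintype.card F else 1) := by
        refine Finset.sum_le_sum fun l hl => Finset.sum_le_sum fun l' hl' => ?_
        by_cases h : l = l'
        · subst h
          simp only [if_pos rfl]
          calc _ ≤ ((univ : Finset (F × F)).filter (fun p => p.2 = l.1 * (p.1 - l.2))).card :=
                Finset.card_le_card (Finset.filter_subset_filter _ (fun p hp => hp) |>.trans
                  (by intro p hp; simp only [mem_filter] at hp ⊢; exact ⟨hp.1, hp.2.1⟩))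
            _ = Fintype.card F := line_card l.1 l.2
        · rw [if_neg h]
          exact two_lines l l' (hL l hl) h
    _ ≤ L.card * Fintype.card F + L.card ^ 2 := by
        calc ∑ l ∈ L, ∑ l' ∈ L, (if l = l' then Fintype.card F else 1)
            ≤ ∑ l ∈ L, (Fintype.card F + L.card) := by
              refine Finset.sum_le_sum fun l hl => ?_
              calc ∑ l' ∈ L, (if l = l' then Fintype.card F else 1)
                  ≤ ∑ l' ∈ L, ((if l = l' then Fintype.card F else 0) + 1) := by
                    refine Finset.sum_le_sum fun l' _ => ?_
                    by_cases h : l = l' <;> simp [h]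
                _ = (∑ l' ∈ L, (if l = l' then Fintype.card F else 0)) + L.card := by
                    rw [Finset.sum_add_distrib, Finset.sum_const, smul_eq_mul, mul_one]
                _ ≤ Fintype.card F + L.card := by
                    gcongr
                    simp [Finset.sum_ite_eq, hl]
          _ = L.card * (Fintype.card F + L.card) := by rw [Finset.sum_const, smul_eq_mul]
          _ = L.card * Fintype.card F + L.card ^ 2 := by ring

-- lower bound: each line (m,b) ∈ X ×ˢ A carries |A| points of P = (A+A) ×ˢ (X*A)
lemma I_lower (A X : Finset F) :
    (X ×ˢ A).card * A.card ≤
      ∑ p ∈ ((A+A) ×ˢ (X*A)), ((X ×ˢ A).filter (fun l => p.2 = l.1 * (p.1 - l.2))).card := by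
  simp_rw [Finset.card_filter]
  rw [Finset.sum_comm]
  have key : ∀ l ∈ X ×ˢ A, A.card ≤
      ∑ p ∈ ((A+A) ×ˢ (X*A)), (if p.2 = l.1 * (p.1 - l.2) then 1 else 0) := by
    intro l hl
    rw [← Finset.card_filter]
    rw [Finset.mem_product] at hl
    have himg : A.image (fun c => (l.2 + c, l.1 * c)) ⊆
        ((A+A) ×ˢ (X*A)).filter (fun p => p.2 = l.1 * (p.1 - l.2)) := by
      intro p hp
      simp only [Finset.mem_image] at hp
      obtain ⟨c, hc, rfl⟩ := hp
      simp only [Finset.mem_filter, Finset.mem_product]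
      refine ⟨⟨Finset.add_mem_add hl.2 hc, Finset.mul_mem_mul hl.1 hc⟩, ?_⟩
      simp only [add_sub_cancel_left]
    calc A.card = (A.image (fun c => (l.2 + c, l.1 * c))).card := by
          rw [Finset.card_image_of_injective]
          intro c c' h
          have := (Prod.mk.injEq _ _ _ _).mp h |>.1
          exact add_left_cancel this
      _ ≤ _ := Finset.card_le_card himg
  calc (X ×ˢ A).card * A.card = ∑ l ∈ X ×ˢ A, A.card := by
        rw [Finset.sum_const, smul_eq_mul]
    _ ≤ _ := Finset.sum_le_sum key

-- The Elekes–Vinh inequality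
lemma EV (A X : Finset F) (hX : ∀ m ∈ X, m ≠ (0:F)) :
    ((X.card : ℝ) * A.card) * A.card ≤
      ((A+A).card : ℝ) * ((X*A).card) * (X.card * A.card) / (Fintype.card F)
      + Real.sqrt ((Fintype.card F : ℝ) * (((A+A).card : ℝ) * ((X*A).card)) * ((X.card : ℝ) * A.card)) := by
  have hq : (0:ℝ) < (Fintype.card F : ℝ) := by
    exact_mod_cast Fintype.card_pos
  set q : ℕ := Fintype.card F with hqdef
  set Q : ℝ := (q : ℝ) with hQdef
  set L : Finset (F × F) := X ×ˢ A with hLdef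
  set P : Finset (F × F) := (A+A) ×ˢ (X*A) with hPdef
  set N : F × F → ℕ := fun p => (L.filter (fun l => p.2 = l.1 * (p.1 - l.2))).card with hNdef
  have hLc : (L.card : ℝ) = (X.card : ℝ) * A.card := by
    rw [hLdef, Finset.card_product]; push_cast; ring
  have hPc : (P.card : ℝ) = ((A+A).card : ℝ) * ((X*A).card) := by
    rw [hPdef, Finset.card_product]; push_cast; ring
  have hLslope : ∀ l ∈ L, l.1 ≠ (0:F) := by
    intro l hl
    rw [hLdef, Finset.mem_product] at hl
    exact hX l.1 hl.1
  -- first and second moments, real versions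
  have h1 : ∑ p : F × F, (N p : ℝ) = (L.card : ℝ) * Q := by
    rw [← Nat.cast_sum]
    rw [show ∑ p : F × F, N p = L.card * q from sum_N L]
    push_cast; ring
  have h2 : ∑ p : F × F, (N p : ℝ)^2 ≤ (L.card : ℝ) * Q + (L.card : ℝ)^2 := by
    have := sum_N_sq L hLslope
    calc ∑ p : F × F, (N p : ℝ)^2 = ((∑ p : F × F, (N p)^2 : ℕ) : ℝ) := by push_cast; ring
      _ ≤ (((L.card * q + L.card ^ 2 : ℕ)) : ℝ) := by exact_mod_cast this
      _ = (L.card : ℝ) * Q + (L.card : ℝ)^2 := by push_cast; ring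
  -- mean
  set μ : ℝ := (L.card : ℝ) / Q with hμdef
  -- variance bound
  have hT : ∑ p : F × F, ((N p : ℝ) - μ)^2 ≤ (L.card : ℝ) * Q := by
    have expand : ∀ p : F × F, ((N p : ℝ) - μ)^2 = (N p : ℝ)^2 - 2*μ*(N p : ℝ) + μ^2 := by
      intro p; ring
    calc ∑ p : F × F, ((N p : ℝ) - μ)^2
        = ∑ p : F × F, (N p : ℝ)^2 - 2*μ*(∑ p : F × F, (N p : ℝ))
          + (Fintype.card (F × F) : ℝ) * μ^2 := by
          simp_rw [expand]
          rw [Finset.sum_add_distrib, Finset.sum_sub_distrib, ← Finset.mul_sum]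
          rw [Finset.sum_const, Finset.card_univ, nsmul_eq_mul]
          try ring
      _ = ∑ p : F × F, (N p : ℝ)^2 - 2*μ*((L.card : ℝ)*Q) + (Q*Q) * μ^2 := by
          rw [h1, Fintype.card_prod]
          push_cast
          try ring_nf
          rfl
      _ = ∑ p : F × F, (N p : ℝ)^2 - (L.card : ℝ)^2 := by
          rw [hμdef]
          field_simp
          ring
      _ ≤ (L.card : ℝ) * Q := by
          have := h2; linarith
  -- incidence upper bound
  have hupper : ∑ p ∈ P, (N p : ℝ) ≤ (P.card : ℝ) * μ + Real.sqrt ((P.card : ℝ) * ((L.card : ℝ) * Q)) := by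
    have hsplit : ∑ p ∈ P, (N p : ℝ) = ∑ p ∈ P, ((N p : ℝ) - μ) + (P.card : ℝ) * μ := by
      rw [Finset.sum_sub_distrib, Finset.sum_const, nsmul_eq_mul]
      ring
    rw [hsplit]
    have hdev : ∑ p ∈ P, ((N p : ℝ) - μ) ≤ Real.sqrt ((P.card : ℝ) * ((L.card : ℝ) * Q)) := by
      have cs : (∑ p ∈ P, ((N p : ℝ) - μ))^2 ≤ (P.card : ℝ) * ∑ p ∈ P, ((N p : ℝ) - μ)^2 :=
        sq_sum_le_card_mul_sum_sq
      have hext : ∑ p ∈ P, ((N p : ℝ) - μ)^2 ≤ ∑ p : F × F, ((N p : ℝ) - μ)^2 :=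
        Finset.sum_le_univ_sum_of_nonneg (fun p => sq_nonneg _)
      have : (∑ p ∈ P, ((N p : ℝ) - μ))^2 ≤ (P.card : ℝ) * ((L.card : ℝ) * Q) := by
        calc (∑ p ∈ P, ((N p : ℝ) - μ))^2 ≤ (P.card : ℝ) * ∑ p ∈ P, ((N p : ℝ) - μ)^2 := cs
          _ ≤ (P.card : ℝ) * ∑ p : F × F, ((N p : ℝ) - μ)^2 := by
              apply mul_le_mul_of_nonneg_left hext (Nat.cast_nonneg _)
          _ ≤ (P.card : ℝ) * ((L.card : ℝ) * Q) := by
              apply mul_le_mul_of_nonneg_left hT (Nat.cast_nonneg _)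
      calc ∑ p ∈ P, ((N p : ℝ) - μ) ≤ |∑ p ∈ P, ((N p : ℝ) - μ)| := le_abs_self _
        _ = Real.sqrt ((∑ p ∈ P, ((N p : ℝ) - μ))^2) := (Real.sqrt_sq_eq_abs _).symm
        _ ≤ Real.sqrt ((P.card : ℝ) * ((L.card : ℝ) * Q)) := Real.sqrt_le_sqrt this
    linarith
  -- incidence lower bound
  have hlower : ((X.card : ℝ) * A.card) * A.card ≤ ∑ p ∈ P, (N p : ℝ) := by
    have := I_lower (F := F) A X
    rw [← hLc]
    rw [← Nat.cast_sum]
    exact_mod_cast this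
  -- combine
  have final := le_trans hlower hupper
  calc ((X.card : ℝ) * A.card) * A.card
      ≤ (P.card : ℝ) * μ + Real.sqrt ((P.card : ℝ) * ((L.card : ℝ) * Q)) := final
    _ = ((A+A).card : ℝ) * ((X*A).card) * (X.card * A.card) / Q
        + Real.sqrt (Q * (((A+A).card : ℝ) * ((X*A).card)) * ((X.card : ℝ) * A.card)) := by
        rw [hμdef, hPc, hLc]
        congr 1
        · ring
        · congr 1; ring

lemma step_lemma (A X : Finset F) (hAne : A.Nonempty) (hXne : X.Nonempty)
    (hX : ∀ m ∈ X, m ≠ (0:F)) (Kb : ℝ) (hKb : 1 ≤ Kb)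
    (hS : ((A+A).card : ℝ) ≤ Kb * A.card) :
    min ((Fintype.card F : ℝ)/(2*Kb)) ((X.card : ℝ) * ((A.card:ℝ))^2 / (4*Kb*(Fintype.card F:ℝ)))
      ≤ ((X*A).card : ℝ) := by
  have hQ0 : (0:ℝ) < (Fintype.card F : ℝ) := by exact_mod_cast Fintype.card_pos
  set Q : ℝ := (Fintype.card F : ℝ) with hQdef
  set a : ℝ := (A.card : ℝ) with hadef
  set x : ℝ := (X.card : ℝ) with hxdef
  set y : ℝ := ((X*A).card : ℝ) with hydef
  set s : ℝ := ((A+A).card : ℝ) with hsdef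
  have ha0 : 0 < a := by rw [hadef]; exact_mod_cast Finset.card_pos.mpr hAne
  have hx0 : 0 < x := by rw [hxdef]; exact_mod_cast Finset.card_pos.mpr hXne
  have hy0 : 0 < y := by rw [hydef]; exact_mod_cast Finset.card_pos.mpr (hXne.mul hAne)
  have hs0 : 0 < s := by rw [hsdef]; exact_mod_cast Finset.card_pos.mpr (hAne.add hAne)
  have hKb0 : (0:ℝ) < Kb := lt_of_lt_of_le one_pos hKb
  have hxaa : (0:ℝ) < x*(a*a) := by positivity
  have ev := EV A X hX
  rw [← hQdef, ← hadef, ← hxdef, ← hydef, ← hsdef] at ev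
  by_cases hcase : x*a*a/2 ≤ s * y * (x*a) / Q
  · -- main term dominates : y ≥ Q/(2Kb)
    refine le_trans (min_le_left _ _) ?_
    have h1 : x*a*a/2 * Q ≤ s * y * (x*a) := (le_div_iff₀ hQ0).mp hcase
    have h2 : x*a*a/2*Q ≤ (Kb*a) * (y * (x*a)) := by
      refine le_trans h1 ?_
      calc s * y * (x*a) = (y*(x*a)) * s := by ring
        _ ≤ (y*(x*a)) * (Kb*a) := mul_le_mul_of_nonneg_left hS (by positivity)
        _ = (Kb*a) * (y*(x*a)) := by ring
    have e1 : x*a*a/2*Q = (x*(a*a))*(Q/2) := by ring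
    have e2 : (Kb*a) * (y * (x*a)) = (x*(a*a))*(Kb*y) := by ring
    have h3 : (x*(a*a))*(Q/2) ≤ (x*(a*a))*(Kb*y) := by rw [← e1, ← e2]; exact h2
    have h4 : Q/2 ≤ Kb*y := le_of_mul_le_mul_left h3 hxaa
    rw [div_le_iff₀ (by positivity)]
    linarith
  · -- error term dominates : y ≥ x a² / (4 Kb Q)
    refine le_trans (min_le_right _ _) ?_
    push_neg at hcase
    have hsq : x*a*a/2 ≤ Real.sqrt (Q * (s*y) * (x*a)) := by linarith
    have hsq2 : (x*a*a/2)^2 ≤ Q * (s*y) * (x*a) :=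
      ((Real.le_sqrt (by positivity) (by positivity)).mp hsq)
    have hsq3 : (x*a*a/2)^2 ≤ (Q*(x*a)*y) * (Kb*a) := by
      refine le_trans hsq2 ?_
      calc Q * (s*y) * (x*a) = (Q*(x*a)*y) * s := by ring
        _ ≤ (Q*(x*a)*y) * (Kb*a) := mul_le_mul_of_nonneg_left hS (by positivity)
    have e3 : (x*a*a/2)^2 = (x*(a*a))*((x*(a*a))/4) := by ring
    have e4 : (Q*(x*a)*y) * (Kb*a) = (x*(a*a))*(Kb*Q*y) := by ring
    have h4 : (x*(a*a))*((x*(a*a))/4) ≤ (x*(a*a))*(Kb*Q*y) := by rw [← e3, ← e4]; exact hsq3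
    have h5 : (x*(a*a))/4 ≤ Kb*Q*y := le_of_mul_le_mul_left h4 hxaa
    have e5 : x*a^2 = x*(a*a) := by ring
    rw [div_le_iff₀ (by positivity)]
    linarith

lemma pow_ne_zero_mem (A : Finset F) (h0A : (0:F) ∉ A) :
    ∀ n : ℕ, ∀ m ∈ A^n, m ≠ (0:F) := by
  intro n
  induction n with
  | zero =>
    intro m hm
    rw [pow_zero, Finset.mem_one] at hm
    subst hm
    exact one_ne_zero
  | succ n ih =>
    intro m hm
    rw [pow_succ, Finset.mem_mul] at hm
    obtain ⟨u, hu, v, hv, rfl⟩ := hm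
    exact mul_ne_zero (ih u hu) (fun hv0 => h0A (hv0 ▸ hv))

lemma iter_lemma (A : Finset F) (hAne : A.Nonempty) (h0A : (0:F) ∉ A)
    (Kb : ℝ) (hKb : 1 ≤ Kb) (hS : ((A+A).card:ℝ) ≤ Kb * A.card)
    (hbig : 4*Kb*(Fintype.card F:ℝ) ≤ ((A.card:ℝ))^2) :
    ∀ n : ℕ, min ((Fintype.card F:ℝ)/(2*Kb)) (((A.card:ℝ))^(2*n+1)/((4*Kb*(Fintype.card F:ℝ))^n))
      ≤ ((A^(n+1)).card : ℝ) := by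
  have hQ0 : (0:ℝ) < (Fintype.card F : ℝ) := by exact_mod_cast Fintype.card_pos
  set Q : ℝ := (Fintype.card F : ℝ) with hQdef
  set a : ℝ := (A.card : ℝ) with hadef
  set M : ℝ := Q/(2*Kb) with hMdef
  set D : ℝ := 4*Kb*Q with hDdef
  have hKb0 : (0:ℝ) < Kb := lt_of_lt_of_le one_pos hKb
  have ha0 : 0 < a := by rw [hadef]; exact_mod_cast Finset.card_pos.mpr hAne
  have hD0 : 0 < D := by rw [hDdef]; positivity
  have hratio : 1 ≤ a^2/D := (one_le_div hD0).mpr hbig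
  intro n
  induction n with
  | zero =>
    have : min M (a^(2*0+1)/D^0) ≤ a := by
      refine le_trans (min_le_right _ _) ?_
      simp
    calc min M (a^(2*0+1)/D^0) ≤ a := this
      _ = ((A^(0+1)).card : ℝ) := by rw [hadef, pow_one]
  | succ n ih =>
    -- step: A^(n+2) = A^(n+1) * A
    have hstep := step_lemma A (A^(n+1)) hAne (hAne.pow) (pow_ne_zero_mem A h0A (n+1)) Kb hKb hS
    rw [← hQdef, ← hadef] at hstep
    rw [← pow_succ] at hstep
    set π : ℝ := ((A^(n+1)).card : ℝ) with hπdef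
    have hπ0 : 0 < π := by rw [hπdef]; exact_mod_cast Finset.card_pos.mpr hAne.pow
    -- hstep : min M (π * a^2 / D) ≤ (A^(n+2)).card
    have key : min M (a^(2*(n+1)+1)/D^(n+1)) ≤ min M (π * a^2 / D) := by
      rcases le_total M (a^(2*n+1)/D^n) with h | h
      · -- π ≥ M, so π*a²/D ≥ M
        have hπM : M ≤ π := by rw [min_eq_left h] at ih; exact ih
        have : M ≤ π * a^2/D := by
          calc M = M * 1 := (mul_one M).symm
            _ ≤ π * (a^2/D) := by
                apply mul_le_mul hπM hratio zero_le_one (le_of_lt hπ0)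
            _ = π * a^2/D := by ring
        exact le_trans (min_le_left _ _) (le_min (le_refl M) this)
      · -- π ≥ E_n, so π*a²/D ≥ E_{n+1}
        have hπE : a^(2*n+1)/D^n ≤ π := by rw [min_eq_right h] at ih; exact ih
        have hE : a^(2*(n+1)+1)/D^(n+1) ≤ π * a^2/D := by
          have e : a^(2*n+1)/D^n * (a^2/D) = a^(2*(n+1)+1)/D^(n+1) := by
            rw [div_mul_div_comm, ← pow_add, ← pow_succ,
              show 2*n+1+2 = 2*(n+1)+1 from by ring]
          calc a^(2*(n+1)+1)/D^(n+1) = a^(2*n+1)/D^n * (a^2/D) := e.symm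
            _ ≤ π * (a^2/D) := by
                apply mul_le_mul_of_nonneg_right hπE (by positivity)
            _ = π * a^2/D := by ring
        exact le_min (min_le_left _ _) (le_trans (min_le_right _ _) hE)
    exact le_trans key hstep

set_option maxHeartbeats 1600000 in
theorem small_sumset_large_dfold_product (d : ℕ) (hd : 1 ≤ d) (C' : ℝ) (hC' : 0 < C') :
    ∃ C c : ℝ, 0 < C ∧ 0 < c ∧ ∀ (F : Type) [Field F] [Fintype F] [DecidableEq F] (A : Finset F),
      C * (Fintype.card F : ℝ) ^ ((1 : ℝ) / 2 + 1 / (2 * d)) ≤ A.card →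
      ((A + A).card : ℝ) ≤ C' * A.card →
      c * (Fintype.card F : ℝ) ≤ ((A ^ d).card : ℝ) := by
  obtain ⟨n, rfl⟩ : ∃ n, d = n + 1 := ⟨d - 1, (Nat.succ_pred_eq_of_pos hd).symm⟩
  set K : ℝ := max C' 1 with hKdef
  have hK1 : 1 ≤ K := le_max_right _ _
  have hCK : C' ≤ K := le_max_left _ _
  have hK0 : 0 < K := lt_of_lt_of_le one_pos hK1
  clear_value K
  refine ⟨16*K, 1/(4*K), by positivity, by positivity, ?_⟩
  intro F _ _ _ A hA hAA
  set Q : ℝ := (Fintype.card F : ℝ) with hQdef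
  have hQ0 : (0:ℝ) < Q := by rw [hQdef]; exact_mod_cast Fintype.card_pos
  have hQ1 : (1:ℝ) ≤ Q := by rw [hQdef]; exact_mod_cast Fintype.card_pos
  set t : ℝ := ((n:ℝ)+1) with htdef
  have ht1 : 1 ≤ t := by rw [htdef]; have : (0:ℝ) ≤ (n:ℝ) := Nat.cast_nonneg n; linarith
  have ht0 : 0 < t := lt_of_lt_of_le one_pos ht1
  clear_value t
  set e : ℝ := (1:ℝ)/2 + 1/(2*t) with hedef
  have hecast : (1:ℝ)/2 + 1/(2*((n+1:ℕ):ℝ)) = e := by rw [hedef, htdef]; push_cast; ring_nf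
  have he0 : 0 ≤ e := by rw [hedef]; positivity
  have heh : 1/2 ≤ e := by
    have hpos : (0:ℝ) < 1/(2*t) := by positivity
    rw [hedef]; linarith
  clear_value e
  have hQe1 : 1 ≤ Q^e := Real.one_le_rpow hQ1 he0
  have hQe0 : 0 < Q^e := lt_of_lt_of_le one_pos hQe1
  -- basic size facts
  set a : ℝ := (A.card : ℝ) with hadef
  have hA' : 16*K*Q^e ≤ a := by rw [← hecast]; exact hA
  have ha16 : 16*K ≤ a := by
    calc 16*K = 16*K*1 := by ring
      _ ≤ 16*K*Q^e := by apply mul_le_mul_of_nonneg_left hQe1 (by positivity)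
      _ ≤ a := hA'
  have ha2 : (2:ℝ) ≤ a := by linarith
  -- pass to A₀ = A \ {0}
  set A₀ : Finset F := A.erase 0 with hA₀def
  set a₀ : ℝ := (A₀.card : ℝ) with ha₀def
  have haa0 : a ≤ a₀ + 1 := by
    rw [hadef, ha₀def]
    have h1 : A.card ≤ A₀.card + 1 := by
      calc A.card ≤ (insert (0:F) A₀).card := Finset.card_le_card (Finset.insert_erase_subset 0 A)
        _ ≤ A₀.card + 1 := Finset.card_insert_le _ _
    exact_mod_cast h1
  have ha₀half : a/2 ≤ a₀ := by linarith
  have ha₀1 : 1 ≤ a₀ := by linarith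
  have ha₀0 : 0 < a₀ := by linarith
  have hA₀ne : A₀.Nonempty := by
    apply Finset.card_pos.mp
    have h := ha₀0
    rw [ha₀def] at h
    exact_mod_cast h
  have h0A₀ : (0:F) ∉ A₀ := Finset.notMem_erase 0 A
  -- sumset bound for A₀
  set Kb : ℝ := 2*K with hKbdef
  have hKb1 : 1 ≤ Kb := by rw [hKbdef]; linarith
  have hKb0 : 0 < Kb := lt_of_lt_of_le one_pos hKb1
  have hS : ((A₀+A₀).card : ℝ) ≤ Kb * a₀ := by
    have h1 : (A₀+A₀).card ≤ (A+A).card :=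
      Finset.card_le_card (Finset.add_subset_add (Finset.erase_subset _ _) (Finset.erase_subset _ _))
    have h2 : ((A₀+A₀).card : ℝ) ≤ C' * a := le_trans (by exact_mod_cast h1) hAA
    have h3 : C' * a ≤ K * a := mul_le_mul_of_nonneg_right hCK (by positivity)
    have h4 : K * a ≤ K * (2*a₀) := mul_le_mul_of_nonneg_left (by linarith) (le_of_lt hK0)
    rw [hKbdef]
    calc ((A₀+A₀).card : ℝ) ≤ K * (2*a₀) := le_trans h2 (le_trans h3 h4)
      _ = (2*K)*a₀ := by ring
  clear_value Kb
  -- a₀ ≥ 4 Kb Q^e = 8 K Q^e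
  have ha₀Qe : 4*Kb*Q^e ≤ a₀ := by
    rw [hKbdef]
    calc 4*(2*K)*Q^e = (16*K*Q^e)/2 := by ring
      _ ≤ a/2 := by linarith
      _ ≤ a₀ := ha₀half
  -- the squared size condition
  have hee : (1:ℝ) ≤ e + e := by linarith
  have hQee : Q ≤ Q^e * Q^e := by
    have h1 : Q^e * Q^e = Q^(e+e) := (Real.rpow_add hQ0 e e).symm
    have h2 : Q^(1:ℝ) ≤ Q^(e+e) := Real.rpow_le_rpow_of_exponent_le hQ1 hee
    rw [Real.rpow_one] at h2
    rw [h1]; exact h2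
  have hbig : 4*Kb*Q ≤ a₀^2 := by
    have h1 : (4*Kb*Q^e)^2 ≤ a₀^2 := pow_le_pow_left₀ (by positivity) ha₀Qe 2
    have h2 : (4*Kb*Q^e)^2 = 16*Kb^2*(Q^e*Q^e) := by ring
    have h3 : 16*Kb^2*Q ≤ 16*Kb^2*(Q^e*Q^e) :=
      mul_le_mul_of_nonneg_left hQee (by positivity)
    have h4 : 4*Kb ≤ 16*Kb^2 := by nlinarith
    have h5 : 4*Kb*Q ≤ 16*Kb^2*Q := mul_le_mul_of_nonneg_right h4 (le_of_lt hQ0)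
    linarith
  -- run the recursion
  have iter := iter_lemma A₀ hA₀ne h0A₀ Kb hKb1
    (by rw [← ha₀def]; exact hS) (by rw [← ha₀def, ← hQdef]; exact hbig) n
  rw [← hQdef, ← ha₀def] at iter
  -- show the second term of the min dominates M = Q/(2Kb)
  have hME : Q/(2*Kb) ≤ a₀^(2*n+1)/((4*Kb*Q)^n) := by
    have hD0 : (0:ℝ) < (4*Kb*Q)^n := by positivity
    rw [le_div_iff₀ hD0]
    have h1 : (4*Kb*Q^e)^(2*n+1) ≤ a₀^(2*n+1) := pow_le_pow_left₀ (by positivity) ha₀Qe _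
    have h2 : (4*Kb*Q^e)^(2*n+1) = (4*Kb)^(2*n+1) * (Q^e)^(2*n+1) := mul_pow _ _ _
    have hexp : ((n:ℝ)+1) ≤ e * (2*(n:ℝ)+1) := by
      have key : e * (2*t-1) - t = (t-1)/(2*t) := by
        rw [hedef]
        field_simp
        ring
      have h3 : (0:ℝ) ≤ (t-1)/(2*t) := div_nonneg (by linarith) (by linarith)
      have h4 : t ≤ e*(2*t-1) := by linarith
      rw [htdef] at h4
      calc ((n:ℝ)+1) ≤ e * (2*((n:ℝ)+1)-1) := h4
        _ = e * (2*(n:ℝ)+1) := by ring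
    have h5 : Q^(((n:ℝ))+1) ≤ (Q^e)^(2*n+1) := by
      have h6 : (Q^e)^(2*n+1) = Q^(e*(2*(n:ℝ)+1)) := by
        rw [Real.rpow_mul (le_of_lt hQ0), ← Real.rpow_natCast (Q^e) (2*n+1)]
        congr 1
        push_cast
        ring
      rw [h6]
      exact Real.rpow_le_rpow_of_exponent_le hQ1 hexp
    have h7 : Q^(((n:ℝ))+1) = Q^n * Q := by
      rw [show ((n:ℝ)+1) = ((n+1:ℕ):ℝ) by push_cast; ring]
      rw [Real.rpow_natCast, pow_succ]
    have h8 : (4*Kb)^n ≤ (4*Kb)^(2*n+1) := by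
      apply pow_le_pow_right₀ (by linarith) (by omega)
    have h9 : Q/(2*Kb) * (4*Kb*Q)^n ≤ (4*Kb)^n * (Q^n * Q) := by
      rw [mul_pow]
      have h10 : Q/(2*Kb) ≤ Q := by
        rw [div_le_iff₀ (by positivity)]
        calc Q = Q*1 := (mul_one Q).symm
          _ ≤ Q*(2*Kb) := mul_le_mul_of_nonneg_left (by linarith) (le_of_lt hQ0)
      calc Q/(2*Kb) * ((4*Kb)^n * Q^n) ≤ Q * ((4*Kb)^n * Q^n) :=
            mul_le_mul_of_nonneg_right h10 (by positivity)
        _ = (4*Kb)^n * (Q^n * Q) := by ring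
    have h11 : (4*Kb)^n * (Q^n * Q) ≤ (4*Kb)^(2*n+1) * (Q^e)^(2*n+1) := by
      rw [← h7]
      apply mul_le_mul h8 h5 (by positivity) (by positivity)
    linarith
  rw [min_eq_left hME] at iter
  -- conclude
  have hfinal : ((A₀^(n+1)).card : ℝ) ≤ ((A^(n+1)).card : ℝ) := by
    have hsub : A₀^(n+1) ⊆ A^(n+1) := by
      rw [hA₀def]
      exact Finset.pow_subset_pow_left (Finset.erase_subset _ _)
    exact_mod_cast Finset.card_le_card hsub
  calc 1/(4*K) * Q = Q/(2*Kb) := by rw [hKbdef]; ring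
    _ ≤ ((A₀^(n+1)).card : ℝ) := iter
    _ ≤ ((A^(n+1)).card : ℝ) := hfinal
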